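/- Let A and Q be n×m complex matrices with SVDs A = X_A Σ_A Y_A and Q = X_Q Σ_Q Y_Q, and suppose A A† = ∑_λ q_λ W_λ† Q Q† W_λ for a finite family of n×n unitaries W_λ and reals q_λ > 0. Define the unitaries U_λ by U_λ* = Y_Q† X_Q† W_λ X_A Y_A and set M_λ = √(q_λ) Q U_λ* A‡, where A‡ is the Moore–Penrose pseudoinverse of A. Then M_λ A U_λᵀ = √(q_λ) Q for every λ; i.e., (M_λ ⊗ U_λ)|A⟩⟩ = √(q_λ)|Q⟩⟩, so the protocol transforms |A⟩⟩ into |Q⟩⟩ deterministically. -/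
import Mathlib


open Matrix

/-- The `n × m` "diagonal" matrix with `σ 0, σ 1, …` on the main diagonal. -/
def svdDiag (n m : ℕ) (σ : ℕ → ℝ) : Matrix (Fin n) (Fin m) ℂ :=
  Matrix.of fun i j => if (i : ℕ) = (j : ℕ) then (σ (i : ℕ) : ℂ) else 0

/-- The Moore–Penrose pseudoinverse of `svdDiag n m σ`: diagonal with entries `σᵢ⁻¹`
where `σᵢ ≠ 0` and `0` where `σᵢ = 0` (note `(0 : ℝ)⁻¹ = 0`). -/
noncomputable def svdDiagPinv (n m : ℕ) (σ : ℕ → ℝ) : Matrix (Fin m) (Fin n) ℂ :=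
  Matrix.of fun i j => if (i : ℕ) = (j : ℕ) then ((σ (i : ℕ))⁻¹ : ℂ) else 0

/-- `O = X Σ Y` is a singular value decomposition of `O` : `X`, `Y` unitary and `Σ` the
diagonal matrix of the singular values `σ 0 ≥ σ 1 ≥ … ≥ 0` in decreasing order
(padded with zeros beyond `min n m`). -/
def IsSVD {n m : ℕ} (O : Matrix (Fin n) (Fin m) ℂ) (X : Matrix (Fin n) (Fin n) ℂ)
    (σ : ℕ → ℝ) (Y : Matrix (Fin m) (Fin m) ℂ) : Prop :=
  X ∈ Matrix.unitaryGroup (Fin n) ℂ ∧ Y ∈ Matrix.unitaryGroup (Fin m) ℂ ∧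
  (∀ i, 0 ≤ σ i) ∧ Antitone σ ∧ (∀ i, min n m ≤ i → σ i = 0) ∧
  O = X * svdDiag n m σ * Y

/-- `Ad` is the Moore–Penrose pseudoinverse of `A`. -/
def IsMoorePenroseInv {n m : ℕ} (A : Matrix (Fin n) (Fin m) ℂ)
    (Ad : Matrix (Fin m) (Fin n) ℂ) : Prop :=
  A * Ad * A = A ∧ Ad * A * Ad = Ad ∧ (A * Ad).IsHermitian ∧ (Ad * A).IsHermitian

lemma aux_sum_mulVec {n : ℕ} {ι : Type*} (s : Finset ι) (M : ι → Matrix (Fin n) (Fin n) ℂ)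
    (v : Fin n → ℂ) : (∑ k ∈ s, M k) *ᵥ v = ∑ k ∈ s, M k *ᵥ v := by
  ext i
  simp only [Matrix.mulVec, dotProduct, Finset.sum_apply, Matrix.sum_apply,
    Finset.sum_mul]
  exact Finset.sum_comm

lemma aux_dotProduct_sum {n : ℕ} {ι : Type*} (s : Finset ι) (v : Fin n → ℂ)
    (w : ι → Fin n → ℂ) : v ⬝ᵥ (∑ k ∈ s, w k) = ∑ k ∈ s, v ⬝ᵥ w k := by
  simp only [dotProduct, Finset.sum_apply, Finset.mul_sum]
  exact Finset.sum_comm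

lemma aux_svdDiag_herm (n : ℕ) (σ : ℕ → ℝ) : (svdDiag n n σ)ᴴ = svdDiag n n σ := by
  ext i j
  simp only [svdDiag, Matrix.conjTranspose_apply, Matrix.of_apply]
  by_cases h : (i : ℕ) = (j : ℕ)
  · rw [if_pos h, if_pos h.symm, h, Complex.star_def, Complex.conj_ofReal]
  · rw [if_neg h, if_neg (fun hh => h hh.symm), star_zero]

/-- **Deterministic protocol: the outcomes reach the intermediate state.** Given SVDs
`A = X_A Σ_A Y_A`, `Q = X_Q Σ_Q Y_Q`, unitaries `W_λ` and `q_λ > 0` with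
`A A† = ∑_λ q_λ W_λ† Q Q† W_λ`, define the unitaries `U_λ` by `U_λ* = Y_Q† X_Q† W_λ X_A Y_A`
and set `M_λ = √q_λ Q U_λ* A‡`. Then `M_λ A U_λᵀ = √q_λ Q` for every `λ`, i.e.
`(M_λ ⊗ U_λ)|A⟩⟩ = √q_λ |Q⟩⟩`: the protocol transforms `|A⟩⟩` into `|Q⟩⟩` deterministically. -/
theorem deterministic_protocol_reaches_target {n K : ℕ} (A Q : Matrix (Fin n) (Fin n) ℂ)
    (XA : Matrix (Fin n) (Fin n) ℂ) (σA : ℕ → ℝ) (YA : Matrix (Fin n) (Fin n) ℂ)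
    (hA : IsSVD A XA σA YA)
    (XQ : Matrix (Fin n) (Fin n) ℂ) (σQ : ℕ → ℝ) (YQ : Matrix (Fin n) (Fin n) ℂ)
    (hQ : IsSVD Q XQ σQ YQ)
    (W : Fin K → Matrix (Fin n) (Fin n) ℂ) (hW : ∀ l, W l ∈ Matrix.unitaryGroup (Fin n) ℂ)
    (q : Fin K → ℝ) (hq : ∀ l, 0 < q l)
    (hsum : A * Aᴴ = ∑ l, q l • ((W l)ᴴ * (Q * Qᴴ) * W l))
    (Ad : Matrix (Fin n) (Fin n) ℂ) (hAd : IsMoorePenroseInv A Ad)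
    (U : Fin K → Matrix (Fin n) (Fin n) ℂ)
    (hU : U = fun l => (YQᴴ * XQᴴ * W l * XA * YA).map (starRingEnd ℂ))
    (M : Fin K → Matrix (Fin n) (Fin n) ℂ)
    (hM : M = fun l => Real.sqrt (q l) • (Q * (YQᴴ * XQᴴ * W l * XA * YA) * Ad)) :
    ∀ l, M l * A * (U l)ᵀ = Real.sqrt (q l) • Q := by
  obtain ⟨hXA, hYA, -, -, -, hAeq⟩ := hA
  obtain ⟨hXQ, hYQ, -, -, -, hQeq⟩ := hQ
  have uXA1 : XAᴴ * XA = 1 := by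
    simpa [Matrix.star_eq_conjTranspose] using Matrix.mem_unitaryGroup_iff'.mp hXA
  have uXA2 : XA * XAᴴ = 1 := by
    simpa [Matrix.star_eq_conjTranspose] using Matrix.mem_unitaryGroup_iff.mp hXA
  have uYA1 : YAᴴ * YA = 1 := by
    simpa [Matrix.star_eq_conjTranspose] using Matrix.mem_unitaryGroup_iff'.mp hYA
  have uYA2 : YA * YAᴴ = 1 := by
    simpa [Matrix.star_eq_conjTranspose] using Matrix.mem_unitaryGroup_iff.mp hYA
  have uXQ1 : XQᴴ * XQ = 1 := by
    simpa [Matrix.star_eq_conjTranspose] using Matrix.mem_unitaryGroup_iff'.mp hXQ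
  have uXQ2 : XQ * XQᴴ = 1 := by
    simpa [Matrix.star_eq_conjTranspose] using Matrix.mem_unitaryGroup_iff.mp hXQ
  have uYQ1 : YQᴴ * YQ = 1 := by
    simpa [Matrix.star_eq_conjTranspose] using Matrix.mem_unitaryGroup_iff'.mp hYQ
  have uYQ2 : YQ * YQᴴ = 1 := by
    simpa [Matrix.star_eq_conjTranspose] using Matrix.mem_unitaryGroup_iff.mp hYQ
  have uW1 : ∀ l, (W l)ᴴ * W l = 1 := fun l => by
    simpa [Matrix.star_eq_conjTranspose] using Matrix.mem_unitaryGroup_iff'.mp (hW l)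
  have uW2 : ∀ l, W l * (W l)ᴴ = 1 := fun l => by
    simpa [Matrix.star_eq_conjTranspose] using Matrix.mem_unitaryGroup_iff.mp (hW l)
  -- kernel containment, vector version
  have hker : ∀ x : Fin n → ℂ, Aᴴ *ᵥ x = 0 → ∀ l', Qᴴ *ᵥ (W l' *ᵥ x) = 0 := by
    intro x hx l'
    set z : Fin K → Fin n → ℂ := fun k => Qᴴ *ᵥ (W k *ᵥ x) with hz
    have hterm : ∀ k, star x ⬝ᵥ ((q k • ((W k)ᴴ * (Q * Qᴴ) * W k)) *ᵥ x)
        = ((q k * ∑ i, Complex.normSq (z k i) : ℝ) : ℂ) := by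
      intro k
      have hB : (W k)ᴴ * (Q * Qᴴ) * W k = (Qᴴ * W k)ᴴ * (Qᴴ * W k) := by
        simp [Matrix.conjTranspose_mul, Matrix.mul_assoc]
      have h1 : star x ⬝ᵥ (((Qᴴ * W k)ᴴ * (Qᴴ * W k)) *ᵥ x)
          = star ((Qᴴ * W k) *ᵥ x) ⬝ᵥ ((Qᴴ * W k) *ᵥ x) := by
        rw [← Matrix.mulVec_mulVec, Matrix.dotProduct_mulVec, ← Matrix.star_mulVec]
      have hzz : (Qᴴ * W k) *ᵥ x = z k := by
        rw [hz, ← Matrix.mulVec_mulVec]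
      have h2 : star (z k) ⬝ᵥ z k = ((∑ i, Complex.normSq (z k i) : ℝ) : ℂ) := by
        simp only [dotProduct, Pi.star_apply, Complex.star_def]
        push_cast
        exact Finset.sum_congr rfl fun i _ => by rw [mul_comm, Complex.mul_conj]
      calc star x ⬝ᵥ ((q k • ((W k)ᴴ * (Q * Qᴴ) * W k)) *ᵥ x)
          = q k • (star x ⬝ᵥ (((W k)ᴴ * (Q * Qᴴ) * W k) *ᵥ x)) := by
            rw [Matrix.smul_mulVec, dotProduct_smul]
        _ = q k • ((∑ i, Complex.normSq (z k i) : ℝ) : ℂ) := by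
            rw [hB, h1, hzz, h2]
        _ = ((q k * ∑ i, Complex.normSq (z k i) : ℝ) : ℂ) := by
            rw [Complex.real_smul]; push_cast; ring
    have hx0 : star x ⬝ᵥ ((A * Aᴴ) *ᵥ x) = 0 := by
      rw [← Matrix.mulVec_mulVec, hx, Matrix.mulVec_zero, dotProduct_zero]
    have hsum0 : ((∑ k, q k * ∑ i, Complex.normSq (z k i) : ℝ) : ℂ) = 0 := by
      calc ((∑ k, q k * ∑ i, Complex.normSq (z k i) : ℝ) : ℂ)
          = ∑ k, ((q k * ∑ i, Complex.normSq (z k i) : ℝ) : ℂ) := by push_cast; rfl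
        _ = ∑ k, star x ⬝ᵥ ((q k • ((W k)ᴴ * (Q * Qᴴ) * W k)) *ᵥ x) :=
            Finset.sum_congr rfl fun k _ => (hterm k).symm
        _ = star x ⬝ᵥ ((∑ k, q k • ((W k)ᴴ * (Q * Qᴴ) * W k)) *ᵥ x) := by
            rw [aux_sum_mulVec, aux_dotProduct_sum]
        _ = 0 := by rw [← hsum, hx0]
    have hr : ∑ k, q k * (∑ i, Complex.normSq (z k i)) = 0 := by exact_mod_cast hsum0
    have h3 := (Finset.sum_eq_zero_iff_of_nonneg (fun k _ =>
      mul_nonneg (hq k).le (Finset.sum_nonneg fun i _ => Complex.normSq_nonneg _))).mp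
      hr l' (Finset.mem_univ _)
    have h4 : ∑ i, Complex.normSq (z l' i) = 0 := by
      rcases mul_eq_zero.mp h3 with h | h
      · exact absurd h (ne_of_gt (hq l'))
      · exact h
    have h5 := Finset.sum_eq_zero_iff_of_nonneg
      (fun i (_ : i ∈ Finset.univ) => Complex.normSq_nonneg (z l' i)) |>.mp h4
    funext i
    exact Complex.normSq_eq_zero.mp (h5 i (Finset.mem_univ _))
  -- matrix-level range containment
  have hAdP : Aᴴ * (A * Ad) = Aᴴ := by
    have : Aᴴ * (A * Ad) = (A * Ad * A)ᴴ := by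
      rw [Matrix.conjTranspose_mul, hAd.2.2.1.eq]
    rw [this, hAd.1]
  have hAdA : Aᴴ * (1 - A * Ad) = 0 := by
    rw [Matrix.mul_sub, Matrix.mul_one, hAdP, sub_self]
  intro l
  have hQW0 : Qᴴ * W l * (1 - A * Ad) = 0 := by
    have hv : ∀ x : Fin n → ℂ, (Qᴴ * W l * (1 - A * Ad)) *ᵥ x = 0 := by
      intro x
      have hx : Aᴴ *ᵥ ((1 - A * Ad) *ᵥ x) = 0 := by
        rw [Matrix.mulVec_mulVec, hAdA, Matrix.zero_mulVec]
      have h := hker _ hx l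
      calc (Qᴴ * W l * (1 - A * Ad)) *ᵥ x
          = Qᴴ *ᵥ (W l *ᵥ ((1 - A * Ad) *ᵥ x)) := by
            rw [Matrix.mulVec_mulVec, Matrix.mulVec_mulVec, Matrix.mul_assoc]
        _ = 0 := h
    ext i j
    have := congrFun (hv (Pi.single j 1)) i
    simpa using this
  have hWQ : (A * Ad) * ((W l)ᴴ * Q) = (W l)ᴴ * Q := by
    have h := congrArg Matrix.conjTranspose hQW0
    simp only [Matrix.conjTranspose_mul, Matrix.conjTranspose_sub, Matrix.conjTranspose_one,
      Matrix.conjTranspose_conjTranspose, Matrix.conjTranspose_zero, hAd.2.2.1.eq] at h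
    rw [Matrix.sub_mul, Matrix.one_mul] at h
    exact (sub_eq_zero.mp h).symm
  -- abbreviations and cancellation lemmas
  have hSigA := aux_svdDiag_herm n σA
  have hSigQ := aux_svdDiag_herm n σQ
  have cXA : ∀ Z : Matrix (Fin n) (Fin n) ℂ, XAᴴ * (XA * Z) = Z := fun Z => by
    rw [← Matrix.mul_assoc, uXA1, Matrix.one_mul]
  have cXA' : ∀ Z : Matrix (Fin n) (Fin n) ℂ, XA * (XAᴴ * Z) = Z := fun Z => by
    rw [← Matrix.mul_assoc, uXA2, Matrix.one_mul]
  have cYA : ∀ Z : Matrix (Fin n) (Fin n) ℂ, YAᴴ * (YA * Z) = Z := fun Z => by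
    rw [← Matrix.mul_assoc, uYA1, Matrix.one_mul]
  have cYA' : ∀ Z : Matrix (Fin n) (Fin n) ℂ, YA * (YAᴴ * Z) = Z := fun Z => by
    rw [← Matrix.mul_assoc, uYA2, Matrix.one_mul]
  have cXQ : ∀ Z : Matrix (Fin n) (Fin n) ℂ, XQᴴ * (XQ * Z) = Z := fun Z => by
    rw [← Matrix.mul_assoc, uXQ1, Matrix.one_mul]
  have cXQ' : ∀ Z : Matrix (Fin n) (Fin n) ℂ, XQ * (XQᴴ * Z) = Z := fun Z => by
    rw [← Matrix.mul_assoc, uXQ2, Matrix.one_mul]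
  have cYQ : ∀ Z : Matrix (Fin n) (Fin n) ℂ, YQᴴ * (YQ * Z) = Z := fun Z => by
    rw [← Matrix.mul_assoc, uYQ1, Matrix.one_mul]
  have cYQ' : ∀ Z : Matrix (Fin n) (Fin n) ℂ, YQ * (YQᴴ * Z) = Z := fun Z => by
    rw [← Matrix.mul_assoc, uYQ2, Matrix.one_mul]
  have cW : ∀ Z : Matrix (Fin n) (Fin n) ℂ, W l * ((W l)ᴴ * Z) = Z := fun Z => by
    rw [← Matrix.mul_assoc, uW2 l, Matrix.one_mul]
  subst hM hU
  set V : Matrix (Fin n) (Fin n) ℂ := YQᴴ * XQᴴ * W l * XA * YA with hV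
  have hVH : Vᴴ = YAᴴ * (XAᴴ * ((W l)ᴴ * (XQ * YQ))) := by
    rw [hV]; simp only [Matrix.conjTranspose_mul, Matrix.conjTranspose_conjTranspose,
      Matrix.mul_assoc]
  have hVV : V * Vᴴ = 1 := by
    rw [hV, hVH]
    simp only [Matrix.mul_assoc, cYA', cXA', cW, cXQ, uYQ1]
  have hmid : XQ * (YQ * Qᴴ) = Q * (YQᴴ * XQᴴ) := by
    rw [hQeq]
    simp only [Matrix.conjTranspose_mul, hSigQ, Matrix.mul_assoc, cYQ', cXQ]
  have haux : YAᴴ * (XAᴴ * A) = Aᴴ * (XA * YA) := by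
    rw [hAeq]
    simp only [Matrix.conjTranspose_mul, hSigA, Matrix.mul_assoc, cXA]
  have hWQ' : (W l)ᴴ * (Q * (YQᴴ * XQᴴ))
      = (A * Ad) * ((W l)ᴴ * (Q * (YQᴴ * XQᴴ))) := by
    have h := congrArg (· * (YQᴴ * XQᴴ)) hWQ
    simp only [Matrix.mul_assoc] at h
    rw [← Matrix.mul_assoc] at h
    exact h.symm
  have hstar : Ad * (A * (Vᴴ * Qᴴ)) = Vᴴ * Qᴴ := by
    have hVQ : Vᴴ * Qᴴ
        = Aᴴ * (XA * (YA * (Ad * ((W l)ᴴ * (Q * (YQᴴ * XQᴴ)))))) := by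
      calc Vᴴ * Qᴴ = YAᴴ * (XAᴴ * ((W l)ᴴ * (XQ * (YQ * Qᴴ)))) := by
            rw [hVH]; simp only [Matrix.mul_assoc]
        _ = YAᴴ * (XAᴴ * ((W l)ᴴ * (Q * (YQᴴ * XQᴴ)))) := by rw [hmid]
        _ = YAᴴ * (XAᴴ * ((A * Ad) * ((W l)ᴴ * (Q * (YQᴴ * XQᴴ))))) := by
            conv_lhs => rw [hWQ']
        _ = (YAᴴ * (XAᴴ * A)) * (Ad * ((W l)ᴴ * (Q * (YQᴴ * XQᴴ)))) := by
            simp only [Matrix.mul_assoc]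
        _ = (Aᴴ * (XA * YA)) * (Ad * ((W l)ᴴ * (Q * (YQᴴ * XQᴴ)))) := by rw [haux]
        _ = Aᴴ * (XA * (YA * (Ad * ((W l)ᴴ * (Q * (YQᴴ * XQᴴ)))))) := by
            simp only [Matrix.mul_assoc]
    have hAdAH : Ad * (A * Aᴴ) = Aᴴ := by
      have h1 : Ad * (A * Aᴴ) = (Ad * A)ᴴ * Aᴴ := by
        rw [hAd.2.2.2.eq, Matrix.mul_assoc]
      rw [h1, ← Matrix.conjTranspose_mul]
      rw [show A * (Ad * A) = A by rw [← Matrix.mul_assoc, hAd.1]]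
    rw [hVQ]
    calc Ad * (A * (Aᴴ * (XA * (YA * (Ad * ((W l)ᴴ * (Q * (YQᴴ * XQᴴ))))))))
        = (Ad * (A * Aᴴ)) * (XA * (YA * (Ad * ((W l)ᴴ * (Q * (YQᴴ * XQᴴ)))))) := by
          simp only [Matrix.mul_assoc]
      _ = Aᴴ * (XA * (YA * (Ad * ((W l)ᴴ * (Q * (YQᴴ * XQᴴ)))))) := by rw [hAdAH]
  have hkey : Q * (V * (Ad * A)) = Q * V := by
    have h := congrArg Matrix.conjTranspose hstar
    simp only [Matrix.conjTranspose_mul, Matrix.conjTranspose_conjTranspose,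
      Matrix.mul_assoc] at h
    have h2 : Aᴴ * Adᴴ = Ad * A := by
      rw [← Matrix.conjTranspose_mul]; exact hAd.2.2.2.eq
    rwa [h2] at h
  have hUT : ((YQᴴ * XQᴴ * W l * XA * YA).map (starRingEnd ℂ))ᵀ = Vᴴ := by
    rw [hV]
    ext i j
    simp only [Matrix.transpose_apply, Matrix.map_apply, Matrix.conjTranspose_apply]
    rfl
  rw [hUT]
  have hfin : Q * V * Ad * A * Vᴴ = Q := by
    have h := congrArg (· * Vᴴ) hkey
    simp only [Matrix.mul_assoc] at h
    simp only [Matrix.mul_assoc]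
    rw [h, hVV, Matrix.mul_one]
  rw [Matrix.smul_mul, Matrix.smul_mul, hfin]
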